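/- For every integer ℓ ≥ 2 there exist real numbers b_ℓ ∈ [0,1) and c_ℓ ∈ (0, 2√2/(3π)] such that the (ℓ−1)-fold composition κ^ℓ := κ₁ ∘ ⋯ ∘ κ₁ satisfies κ^ℓ(−1+t) = b_ℓ + c_ℓ t^{3/2} + o(t^{3/2}) as t → 0⁺; moreover c_ℓ < 2√2/(3π) whenever ℓ ≥ 3. -/

import Mathlib

open Filter Asymptotics Real Set Topology

/-- The degree-0 arc-cosine function `κ₀(u) = 1 - arccos(u)/π`. -/
noncomputable def kappa0 (u : ℝ) : ℝ := 1 - Real.arccos u / Real.pi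

/-- The degree-1 arc-cosine function `κ₁(u) = (√(1-u²) + u(π - arccos u))/π`. -/
noncomputable def kappa1 (u : ℝ) : ℝ :=
  (Real.sqrt (1 - u ^ 2) + u * (Real.pi - Real.arccos u)) / Real.pi


lemma sin_sub_id_bound {x : ℝ} (hx : |x| ≤ 1) : |Real.sin x - x| ≤ |x| ^ 3 := by
  have h := Real.sin_bound hx
  have h4 : |x| ^ 4 ≤ |x| ^ 3 := by
    have := abs_nonneg x
    nlinarith [pow_nonneg (abs_nonneg x) 3]
  have h3 : |x ^ 3 / 6| ≤ |x| ^ 3 / 6 := by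
    rw [abs_div, abs_pow]; simp
  have e : Real.sin x - x = (Real.sin x - (x - x ^ 3 / 6)) - x ^ 3 / 6 := by ring
  calc |Real.sin x - x| = |(Real.sin x - (x - x ^ 3 / 6)) - x ^ 3 / 6| := by rw [e]
    _ ≤ |Real.sin x - (x - x ^ 3 / 6)| + |x ^ 3 / 6| := abs_sub _ _
    _ ≤ |x| ^ 4 * (5 / 96) + |x| ^ 3 / 6 := by
      have h5 : |x| ^ 5 ≤ |x| ^ 4 := by nlinarith [mul_le_mul_of_nonneg_left hx (pow_nonneg (abs_nonneg x) 4)]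
      linarith [pow_nonneg (abs_nonneg x) 4]
    _ ≤ |x| ^ 3 := by nlinarith [pow_nonneg (abs_nonneg x) 3]

lemma cube_bound {x : ℝ} (hx : |x| ≤ 1 / 2) : |Real.sin x ^ 3 - x ^ 3| ≤ (3 / 2) * x ^ 4 := by
  have hx1 : |x| ≤ 1 := by linarith
  have hd := sin_sub_id_bound hx1
  have hs := Real.abs_sin_le_abs (x := x)
  have factor : Real.sin x ^ 3 - x ^ 3
      = (Real.sin x - x) * (Real.sin x ^ 2 + Real.sin x * x + x ^ 2) := by ring
  have hquad : |Real.sin x ^ 2 + Real.sin x * x + x ^ 2| ≤ 3 * x ^ 2 := by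
    have h1 : Real.sin x ^ 2 ≤ x ^ 2 := Real.sin_sq_le_sq
    have h2 : |Real.sin x * x| ≤ x ^ 2 := by
      rw [abs_mul]
      calc |Real.sin x| * |x| ≤ |x| * |x| := by
            exact mul_le_mul_of_nonneg_right hs (abs_nonneg x)
        _ = x ^ 2 := by rw [← abs_mul, abs_mul_self, sq]
    rw [abs_le] at h2 ⊢
    constructor <;> nlinarith [sq_nonneg (Real.sin x), sq_nonneg x]
  rw [factor, abs_mul]
  calc |Real.sin x - x| * |Real.sin x ^ 2 + Real.sin x * x + x ^ 2|
      ≤ |x| ^ 3 * (3 * x ^ 2) := by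
        exact mul_le_mul hd hquad (abs_nonneg _) (pow_nonneg (abs_nonneg x) 3)
    _ ≤ (3 / 2) * x ^ 4 := by
        have h1 : |x| ^ 3 * (3 * x ^ 2) = 3 * |x| ^ 5 := by
          rw [show |x| ^ 5 = |x| ^ 3 * |x| ^ 2 by ring, ← abs_pow x 2, abs_of_nonneg (sq_nonneg x)]
          ring
        rw [h1]
        have h2 : |x| ^ 5 ≤ (1 / 2) * |x| ^ 4 := by
          have := abs_nonneg x
          nlinarith [pow_nonneg (abs_nonneg x) 4]
        have h3 : |x| ^ 4 = x ^ 4 := by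
          rw [← abs_pow]; exact abs_of_nonneg (by positivity)
        nlinarith

lemma N_bound {x : ℝ} (hx : |x| ≤ 1 / 2) :
    |Real.sin (2 * x) - 2 * x * Real.cos (2 * x) - (8 / 3) * Real.sin x ^ 3| ≤ 10 * x ^ 4 := by
  have h2x : |2 * x| ≤ 1 := by rw [abs_mul]; simp; linarith [abs_nonneg x]
  have hA := Real.sin_bound h2x
  have hB := Real.cos_bound h2x
  have hC := cube_bound hx
  set A := Real.sin (2 * x) - (2 * x - (2 * x) ^ 3 / 6) with hAdef
  set B := Real.cos (2 * x) - (1 - (2 * x) ^ 2 / 2) with hBdef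
  set C := Real.sin x ^ 3 - x ^ 3 with hCdef
  have key : Real.sin (2 * x) - 2 * x * Real.cos (2 * x) - (8 / 3) * Real.sin x ^ 3
      = A - 2 * x * B - (8 / 3) * C := by rw [hAdef, hBdef, hCdef]; ring
  have habs4 : |2 * x| ^ 4 = 16 * x ^ 4 := by
    rw [← abs_pow]
    rw [abs_of_nonneg (by positivity : (0:ℝ) ≤ (2 * x) ^ 4)]; ring
  rw [key]
  have t1 : |A - 2 * x * B - (8 / 3) * C| ≤ |A| + |2 * x * B| + |(8 / 3) * C| := by
    calc |A - 2 * x * B - (8 / 3) * C| ≤ |A - 2 * x * B| + |(8 / 3) * C| := abs_sub _ _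
      _ ≤ |A| + |2 * x * B| + |(8 / 3) * C| := by linarith [abs_sub A (2 * x * B)]
  have b1 : |A| ≤ (5 / 6) * x ^ 4 := by
    have h5 : |2 * x| ^ 5 ≤ |2 * x| ^ 4 := by nlinarith [mul_le_mul_of_nonneg_left h2x (pow_nonneg (abs_nonneg (2 * x)) 4)]
    have hx4 : (0:ℝ) ≤ x ^ 4 := by positivity
    rw [habs4] at h5; linarith
  have b2 : |2 * x * B| ≤ (5 / 6) * x ^ 4 := by
    rw [abs_mul]
    calc |2 * x| * |B| ≤ 1 * (16 * x ^ 4 * (5 / 96)) := by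
          apply mul_le_mul h2x (by rw [habs4] at hB; exact hB) (abs_nonneg _) zero_le_one
      _ = (5 / 6) * x ^ 4 := by ring
  have b3 : |(8 / 3) * C| ≤ 4 * x ^ 4 := by
    rw [abs_mul]
    rw [abs_of_nonneg (by norm_num : (0:ℝ) ≤ (8:ℝ)/3)]
    nlinarith
  nlinarith [pow_nonneg (abs_nonneg x) 4]



lemma hasDerivAt_kappa1 {u : ℝ} (h1 : -1 < u) (h2 : u < 1) :
    HasDerivAt kappa1 (kappa0 u) u := by
  have hu2 : (0:ℝ) < 1 - u ^ 2 := by nlinarith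
  have hsq : Real.sqrt (1 - u ^ 2) ≠ 0 := by positivity
  have hsqpos : (0:ℝ) < Real.sqrt (1 - u ^ 2) := Real.sqrt_pos.mpr hu2
  have hpoly : HasDerivAt (fun u : ℝ => 1 - u ^ 2) (-(2 * u)) u := by
    simpa using ((hasDerivAt_pow 2 u).const_sub 1)
  have hsqrt : HasDerivAt (fun u : ℝ => Real.sqrt (1 - u ^ 2))
      (-(2 * u) / (2 * Real.sqrt (1 - u ^ 2))) u := hpoly.sqrt (by positivity)
  have harccos := Real.hasDerivAt_arccos (ne_of_gt h1) (ne_of_lt h2)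
  have hmul : HasDerivAt (fun u : ℝ => u * (Real.pi - Real.arccos u))
      (1 * (Real.pi - Real.arccos u) + u * (1 / Real.sqrt (1 - u ^ 2))) u := by
    have h := (hasDerivAt_id' u).fun_mul (harccos.const_sub Real.pi)
    simpa using h
  have hsum := (hsqrt.add hmul).div_const Real.pi
  refine hsum.congr_deriv ?_
  unfold kappa0
  have hπ : Real.pi ≠ 0 := Real.pi_ne_zero
  field_simp
  ring



lemma kappa0_pos {u : ℝ} (h : -1 < u) : 0 < kappa0 u := by
  unfold kappa0
  have h1 : Real.arccos u < Real.pi := by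
    have := Real.arccos_neg (-u)
    rw [neg_neg] at this
    rw [this]
    have : 0 < Real.arccos (-u) := Real.arccos_pos.mpr (by linarith)
    linarith
  have := Real.pi_pos
  rw [sub_pos, div_lt_one this]
  exact h1

lemma kappa0_lt_one {u : ℝ} (h : u < 1) : kappa0 u < 1 := by
  unfold kappa0
  have h1 : 0 < Real.arccos u := Real.arccos_pos.mpr h
  have := Real.pi_pos
  have : 0 < Real.arccos u / Real.pi := by positivity
  linarith

lemma kappa1_one : kappa1 1 = 1 := by
  unfold kappa1
  simp [Real.arccos_one, Real.pi_ne_zero]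

lemma continuous_kappa1 : Continuous kappa1 := by
  unfold kappa1
  exact ((Real.continuous_sqrt.comp (by continuity)).add (continuous_id.mul (continuous_const.sub Real.continuous_arccos))).div_const _

lemma kappa1_nonneg {b : ℝ} (hb0 : 0 ≤ b) (hb1 : b ≤ 1) : 0 ≤ kappa1 b := by
  unfold kappa1
  have h1 : 0 ≤ Real.sqrt (1 - b ^ 2) := Real.sqrt_nonneg _
  have h2 : Real.arccos b ≤ Real.pi := Real.arccos_le_pi b
  have := Real.pi_pos
  have h3 : 0 ≤ b * (Real.pi - Real.arccos b) := mul_nonneg hb0 (by linarith)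
  positivity

lemma kappa1_lt_one {b : ℝ} (hb0 : 0 ≤ b) (hb1 : b < 1) : kappa1 b < 1 := by
  have hmono : StrictMonoOn kappa1 (Set.Icc 0 1) := by
    apply strictMonoOn_of_deriv_pos (convex_Icc 0 1) (continuous_kappa1.continuousOn)
    intro x hx
    rw [interior_Icc] at hx
    rw [(hasDerivAt_kappa1 (by linarith [hx.1]) hx.2).deriv]
    exact kappa0_pos (by linarith [hx.1])
  have := hmono (Set.mem_Icc.mpr ⟨hb0, hb1.le⟩) (Set.mem_Icc.mpr ⟨zero_le_one, le_refl 1⟩) hb1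
  rwa [kappa1_one] at this

lemma step {b c : ℝ} (hb0 : 0 ≤ b) (hb1 : b < 1) {f : ℝ → ℝ}
    (hf : (fun t => f t - (b + c * t ^ ((3:ℝ)/2))) =o[𝓝[>] (0:ℝ)] fun t => t ^ ((3:ℝ)/2)) :
    (fun t => kappa1 (f t) - (kappa1 b + (kappa0 b * c) * t ^ ((3:ℝ)/2)))
      =o[𝓝[>] (0:ℝ)] fun t => t ^ ((3:ℝ)/2) := by
  have hOc : (fun t : ℝ => c * t ^ ((3:ℝ)/2)) =O[𝓝[>] (0:ℝ)] fun t => t ^ ((3:ℝ)/2) :=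
    (isBigO_refl _ _).const_mul_left c
  have hO : (fun t : ℝ => f t - b) =O[𝓝[>] (0:ℝ)] fun t => t ^ ((3:ℝ)/2) := by
    have := hf.isBigO.add hOc
    have he : (fun t : ℝ => f t - (b + c * t ^ ((3:ℝ)/2)) + c * t ^ ((3:ℝ)/2))
        = fun t : ℝ => f t - b := by funext t; ring
    rwa [he] at this
  have hpow0 : Tendsto (fun t : ℝ => t ^ ((3:ℝ)/2)) (𝓝[>] (0:ℝ)) (𝓝 0) := by
    have hc : ContinuousAt (fun t : ℝ => t ^ ((3:ℝ)/2)) 0 := by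
      apply Real.continuousAt_rpow_const
      norm_num
    have h0 : (0:ℝ) ^ ((3:ℝ)/2) = 0 := by
      rw [Real.zero_rpow]; norm_num
    have := hc.tendsto
    rw [h0] at this
    exact this.mono_left nhdsWithin_le_nhds
  have htend : Tendsto f (𝓝[>] (0:ℝ)) (𝓝 b) := by
    have h1 : Tendsto (fun t => f t - b) (𝓝[>] (0:ℝ)) (𝓝 0) := hO.trans_tendsto hpow0
    have := h1.add_const b
    simpa using this
  have hderiv := hasDerivAt_kappa1 (lt_of_lt_of_le (by norm_num) hb0) hb1
  have h1 : (fun u => kappa1 u - kappa1 b - (u - b) * kappa0 b) =o[𝓝 b] fun u => u - b := by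
    have := hasDerivAt_iff_isLittleO.mp hderiv
    simpa [smul_eq_mul] using this
  have h2 := (h1.comp_tendsto htend).trans_isBigO hO
  have h3 := hf.const_mul_left (kappa0 b)
  have h4 := h2.add h3
  have he : (fun t => ((fun u => kappa1 u - kappa1 b - (u - b) * kappa0 b) ∘ f) t
        + kappa0 b * (f t - (b + c * t ^ ((3:ℝ)/2))))
      = fun t => kappa1 (f t) - (kappa1 b + (kappa0 b * c) * t ^ ((3:ℝ)/2)) := by
    funext t; simp [Function.comp]; ring
  rwa [he] at h4



noncomputable def Fq (φ : ℝ) : ℝ :=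
  (Real.sin φ - φ * Real.cos φ - (8/3) * Real.sin (φ/2) ^ 3)
    / (2 * Real.sqrt 2 * Real.pi * Real.sin (φ/2) ^ 3)

lemma sin_half_lower {y : ℝ} (h0 : 0 < y) (h1 : y ≤ 1/2) : y / 2 ≤ Real.sin y := by
  have h := Real.sin_gt_sub_cube h0
  have hy2 : y ^ 2 ≤ 1/4 := by nlinarith
  nlinarith [mul_le_mul_of_nonneg_left hy2 h0.le]

lemma one_le_sqrt_two : (1:ℝ) ≤ Real.sqrt 2 := by
  rw [show (1:ℝ) = Real.sqrt 1 by simp]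
  exact Real.sqrt_le_sqrt (by norm_num)

lemma Fq_tendsto : Tendsto Fq (𝓝[>] (0:ℝ)) (𝓝 0) := by
  apply squeeze_zero_norm' (a := fun φ => 10 * φ)
  · filter_upwards [Ioo_mem_nhdsGT_of_mem
        (show (0:ℝ) ∈ Set.Ico (0:ℝ) 1 from ⟨le_refl _, one_pos⟩)] with φ hφ
    obtain ⟨h0, h1⟩ := hφ
    set x := φ / 2 with hxdef
    have hx0 : 0 < x := by positivity
    have hx12 : x ≤ 1/2 := by rw [hxdef]; linarith
    have habs : |x| ≤ 1/2 := by rw [abs_of_pos hx0]; exact hx12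
    have hN := N_bound habs
    have hphi : φ = 2 * x := by rw [hxdef]; ring
    have hs : x / 2 ≤ Real.sin x := sin_half_lower hx0 hx12
    have hspos : 0 < Real.sin x := lt_of_lt_of_le (by linarith) hs
    have hcube : (x/2) ^ 3 ≤ Real.sin x ^ 3 := pow_le_pow_left₀ (by positivity) hs 3
    have hsqrt2 := one_le_sqrt_two
    have hpi := Real.pi_gt_three
    have hden : 0 < 2 * Real.sqrt 2 * Real.pi * Real.sin x ^ 3 := by positivity
    have hFq : Fq φ = (Real.sin (2*x) - 2*x * Real.cos (2*x) - (8/3) * Real.sin x ^ 3)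
        / (2 * Real.sqrt 2 * Real.pi * Real.sin x ^ 3) := by
      unfold Fq
      rw [← hxdef, ← hphi]
    rw [Real.norm_eq_abs, hFq, abs_div, abs_of_pos hden, div_le_iff₀ hden]
    have hnum : |Real.sin (2*x) - 2*x * Real.cos (2*x) - (8/3) * Real.sin x ^ 3| ≤ 10 * x ^ 4 := hN
    have hrhs : 10 * x ^ 4 ≤ 10 * φ * (2 * Real.sqrt 2 * Real.pi * Real.sin x ^ 3) := by
      rw [hphi]
      have hxs : x * (x/2) ^ 3 ≤ x * Real.sin x ^ 3 :=
        mul_le_mul_of_nonneg_left hcube hx0.le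
      have hsp : (3:ℝ) ≤ Real.sqrt 2 * Real.pi := by nlinarith
      have hkey : 3 * (x * (x/2) ^ 3) ≤ (Real.sqrt 2 * Real.pi) * (x * Real.sin x ^ 3) :=
        mul_le_mul hsp hxs (by positivity) (by positivity)
      nlinarith [pow_nonneg hx0.le 4]
    linarith
  · have : Tendsto (fun φ : ℝ => 10 * φ) (𝓝 (0:ℝ)) (𝓝 (10 * 0)) :=
      (continuous_const.mul continuous_id).tendsto 0
    simpa using this.mono_left nhdsWithin_le_nhds

lemma arccos_tendsto : Tendsto (fun t : ℝ => Real.arccos (1 - t)) (𝓝[>] (0:ℝ)) (𝓝[>] (0:ℝ)) := by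
  apply tendsto_nhdsWithin_of_tendsto_nhds_of_eventually_within
  · have h : Tendsto (fun t : ℝ => Real.arccos (1 - t)) (𝓝 (0:ℝ)) (𝓝 (Real.arccos (1 - 0))) :=
      (Real.continuous_arccos.comp (continuous_const.sub continuous_id)).tendsto 0
    simp only [sub_zero, Real.arccos_one] at h
    exact h.mono_left nhdsWithin_le_nhds
  · filter_upwards [self_mem_nhdsWithin] with t ht
    exact Real.arccos_pos.mpr (by simp at ht; linarith)

lemma key_eq {t : ℝ} (h0 : 0 < t) (h1 : t < 1) :
    (kappa1 (-1 + t) - (2 * Real.sqrt 2 / (3 * Real.pi)) * t ^ ((3:ℝ)/2)) / t ^ ((3:ℝ)/2)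
      = Fq (Real.arccos (1 - t)) := by
  set φ := Real.arccos (1 - t) with hφdef
  have hm1 : (-1:ℝ) ≤ 1 - t := by linarith
  have h1' : 1 - t ≤ 1 := by linarith
  have hφpos : 0 < φ := Real.arccos_pos.mpr (by linarith)
  have hφpi : φ ≤ Real.pi := Real.arccos_le_pi _
  have hcos : Real.cos φ = 1 - t := Real.cos_arccos hm1 h1'
  have hsin : Real.sin φ = Real.sqrt (1 - (1 - t) ^ 2) := Real.sin_arccos _
  have hpi := Real.pi_pos
  have hshalf : 0 < Real.sin (φ/2) :=
    Real.sin_pos_of_pos_of_lt_pi (by linarith) (by linarith)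
  have ht2 : t = 2 * Real.sin (φ/2) ^ 2 := by
    have hc2 := Real.cos_two_mul (φ/2)
    rw [show 2 * (φ/2) = φ by ring] at hc2
    have hsc := Real.sin_sq_add_cos_sq (φ/2)
    have : Real.cos φ = 1 - 2 * Real.sin (φ/2) ^ 2 := by linarith
    rw [this] at hcos
    linarith
  have harc : Real.arccos (-1 + t) = Real.pi - φ := by
    rw [show (-1 + t : ℝ) = -(1 - t) by ring, Real.arccos_neg]
  have hsqrt : Real.sqrt (1 - (-1 + t) ^ 2) = Real.sin φ := by
    rw [hsin]; congr 1; ring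
  have hneg : (-1 + t : ℝ) = -(Real.cos φ) := by rw [hcos]; ring
  have hk : kappa1 (-1 + t) = (Real.sin φ - φ * Real.cos φ) / Real.pi := by
    unfold kappa1
    rw [hsqrt, harc, hneg]
    ring
  have hpow : t ^ ((3:ℝ)/2) = 2 * Real.sqrt 2 * Real.sin (φ/2) ^ 3 := by
    rw [ht2, Real.mul_rpow (by norm_num) (sq_nonneg _)]
    have e1 : (2:ℝ) ^ ((3:ℝ)/2) = 2 * Real.sqrt 2 := by
      rw [show (3:ℝ)/2 = 1 + 1/2 by norm_num, Real.rpow_add (by norm_num), Real.rpow_one]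
      rw [← Real.sqrt_eq_rpow]
    have e2 : (Real.sin (φ/2) ^ 2 : ℝ) ^ ((3:ℝ)/2) = Real.sin (φ/2) ^ 3 := by
      rw [← Real.rpow_natCast (Real.sin (φ/2)) 2, ← Real.rpow_mul hshalf.le]
      norm_num
    rw [e1, e2]
  rw [hk, hpow]
  unfold Fq
  have h2 : Real.sqrt 2 * Real.sqrt 2 = 2 := Real.mul_self_sqrt (by norm_num)
  have hcc : 2 * Real.sqrt 2 / (3 * Real.pi) * (2 * Real.sqrt 2 * Real.sin (φ/2) ^ 3)
      = 8 * Real.sin (φ/2) ^ 3 / (3 * Real.pi) := by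
    calc 2 * Real.sqrt 2 / (3 * Real.pi) * (2 * Real.sqrt 2 * Real.sin (φ/2) ^ 3)
        = Real.sqrt 2 * Real.sqrt 2 * (4 * Real.sin (φ/2) ^ 3) / (3 * Real.pi) := by ring
      _ = 8 * Real.sin (φ/2) ^ 3 / (3 * Real.pi) := by rw [h2]; ring
  rw [hcc]
  have hs3 : Real.sin (φ/2) ^ 3 ≠ 0 := by positivity
  have hsq2 : Real.sqrt 2 ≠ 0 := by positivity
  have hπ : Real.pi ≠ 0 := Real.pi_ne_zero
  field_simp



lemma base : (fun t : ℝ => kappa1 (-1 + t)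
      - ((0:ℝ) + (2 * Real.sqrt 2 / (3 * Real.pi)) * t ^ ((3:ℝ)/2)))
    =o[𝓝[>] (0:ℝ)] fun t => t ^ ((3:ℝ)/2) := by
  rw [isLittleO_iff_tendsto']
  · have htd := Fq_tendsto.comp arccos_tendsto
    apply htd.congr'
    filter_upwards [Ioo_mem_nhdsGT_of_mem
      (show (0:ℝ) ∈ Set.Ico (0:ℝ) 1 from ⟨le_refl _, one_pos⟩)] with t ht
    rw [Function.comp_apply, ← key_eq ht.1 ht.2]
    ring_nf
  · filter_upwards [self_mem_nhdsWithin] with t ht h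
    exact absurd h (Real.rpow_pos_of_pos ht _).ne'

lemma main (n : ℕ) : ∃ b c : ℝ, 0 ≤ b ∧ b < 1 ∧ 0 < c ∧
    c ≤ 2 * Real.sqrt 2 / (3 * Real.pi) ∧
    (1 ≤ n → c < 2 * Real.sqrt 2 / (3 * Real.pi)) ∧
    (fun t : ℝ => kappa1^[n + 1] (-1 + t) - (b + c * t ^ ((3:ℝ)/2)))
      =o[𝓝[>] (0:ℝ)] fun t => t ^ ((3:ℝ)/2) := by
  induction n with
  | zero =>
    refine ⟨0, 2 * Real.sqrt 2 / (3 * Real.pi), le_refl _, one_pos, ?_, le_refl _,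
      by omega, ?_⟩
    · have := Real.pi_pos
      positivity
    · simpa [Function.iterate_one] using base
  | succ n ih =>
    obtain ⟨b, c, hb0, hb1, hc0, hcC, _, ho⟩ := ih
    have hb1' : -1 < b := by linarith
    refine ⟨kappa1 b, kappa0 b * c, kappa1_nonneg hb0 hb1.le, kappa1_lt_one hb0 hb1,
      mul_pos (kappa0_pos hb1') hc0, ?_, ?_, ?_⟩
    · exact le_of_lt (by calc kappa0 b * c < 1 * c :=
            mul_lt_mul_of_pos_right (kappa0_lt_one hb1) hc0
          _ = c := one_mul c
          _ ≤ _ := hcC)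
    · intro _
      calc kappa0 b * c < 1 * c := mul_lt_mul_of_pos_right (kappa0_lt_one hb1) hc0
        _ = c := one_mul c
        _ ≤ _ := hcC
    · have := step hb0 hb1 ho
      have he : ∀ t : ℝ, kappa1 (kappa1^[n + 1] (-1 + t)) = kappa1^[n + 1 + 1] (-1 + t) := by
        intro t
        rw [Function.iterate_succ_apply' kappa1 (n+1)]
      simpa only [he] using this



/-- Expansion around `-1` of the deep ReLU random-feature kernel function
`κ^ℓ = κ₁ ∘ ⋯ ∘ κ₁` (`ℓ-1` factors). -/
theorem deep_rf_expansion_minus_one (ℓ : ℕ) (hℓ : 2 ≤ ℓ) :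
    ∃ b c : ℝ, 0 ≤ b ∧ b < 1 ∧ 0 < c ∧ c ≤ 2 * Real.sqrt 2 / (3 * Real.pi) ∧
      (3 ≤ ℓ → c < 2 * Real.sqrt 2 / (3 * Real.pi)) ∧
      (fun t : ℝ => kappa1^[ℓ - 1] (-1 + t) - (b + c * t ^ ((3 : ℝ) / 2)))
        =o[𝓝[>] (0 : ℝ)] fun t => t ^ ((3 : ℝ) / 2) := by
  obtain ⟨b, c, hb0, hb1, hc0, hcC, hlt, ho⟩ := main (ℓ - 2)
  have hi : ℓ - 1 = (ℓ - 2) + 1 := by omega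
  rw [hi]
  exact ⟨b, c, hb0, hb1, hc0, hcC, fun h3 => hlt (by omega), ho⟩
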